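/- arXiv:1010.0351 — 2 statements merged into one kernel-verified Lean document; each statement's English description precedes it below -/
import Mathlib

section
/- Let T be a rigid object in C. Then the subcategory T^⊥ is covariantly finite in C (every object of C admits a left T^⊥-approximation) and ^⊥T is contravariantly finite in C (every object of C admits a right ^⊥T-approximation). -/
/-!
Common setup: `C` is a Hom-finite, Krull-Schmidt (= idempotent complete, given
Hom-finiteness over a field), `k`-linear triangulated category with suspension
functor `Σ = shiftFunctor C (1 : ℤ)`, and `T` is a rigid object of `C`.
-/

noncomputable section

open CategoryTheory CategoryTheory.Limits CategoryTheory.Pretriangulated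

universe v u

namespace PaperBM

variable {C : Type u} [Category.{v} C] [Preadditive C] [HasZeroObject C]
  [HasShift C ℤ] [∀ n : ℤ, (shiftFunctor C n).Additive] [Pretriangulated C]
  [HasFiniteBiproducts C]

/-- `X` lies in `add T`: it is a direct summand of a finite direct sum of copies of `T`. -/
def memAdd (T X : C) : Prop :=
  ∃ (n : ℕ) (s : X ⟶ ⨁ (fun _ : Fin n => T)) (r : (⨁ fun _ : Fin n => T) ⟶ X), s ≫ r = 𝟙 X

/-- `T` is rigid: `Hom_C(T, ΣT) = 0`. -/
def IsRigidObj (T : C) : Prop := ∀ f : T ⟶ (shiftFunctor C (1 : ℤ)).obj T, f = 0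

/-- `Y ∈ T^⊥`, i.e. `Hom_C(X, ΣY) = 0` for all `X ∈ add T`. -/
def memTperp (T Y : C) : Prop :=
  ∀ (X : C), memAdd T X → ∀ f : X ⟶ (shiftFunctor C (1 : ℤ)).obj Y, f = 0

/-- `Y ∈ ⊥T`, i.e. `Hom_C(Y, ΣX) = 0` for all `X ∈ add T`. -/
def memPerpT (T Y : C) : Prop :=
  ∀ (X : C), memAdd T X → ∀ f : Y ⟶ (shiftFunctor C (1 : ℤ)).obj X, f = 0

/-- `Y ∈ ΣT^⊥`, the image of `T^⊥` under the suspension `Σ`. -/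
def memSigmaTperp (T Y : C) : Prop :=
  ∃ Z : C, memTperp T Z ∧ Nonempty (Y ≅ (shiftFunctor C (1 : ℤ)).obj Z)

/-- The map `f` factors through an object belonging to the class `P` of objects. -/
def FactorsThru (P : C → Prop) {A B : C} (f : A ⟶ B) : Prop :=
  ∃ (Z : C) (g : A ⟶ Z) (h : Z ⟶ B), P Z ∧ g ≫ h = f

/-- The class `S̃` of maps `f : X ⟶ Y` such that in a completion
`Σ⁻¹Z →h X →f Y →g Z` of `f` to a triangle (where `A` plays the role of `Σ⁻¹Z`,
so that `Z = ΣA`), both `g` and `h` factor through an object of `ΣT^⊥`. -/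
def Stilde (T : C) : MorphismProperty C := fun X Y f =>
  ∃ (A : C) (h : A ⟶ X) (g : Y ⟶ (shiftFunctor C (1 : ℤ)).obj A),
    (Triangle.mk h f g ∈ distTriang C) ∧
    FactorsThru (memSigmaTperp T) g ∧ FactorsThru (memSigmaTperp T) h

/-- The class `S` of maps `f : X ⟶ Y` such that in a completion
`Σ⁻¹Z →h X →f Y →g Z` of `f` to a triangle (where `A` plays the role of `Σ⁻¹Z`,
so that `Z = ΣA`), `g` factors through an object of `ΣT^⊥` and `Σ⁻¹Z ∈ ΣT^⊥`. -/
def Sclass (T : C) : MorphismProperty C := fun X Y f =>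
  ∃ (A : C) (h : A ⟶ X) (g : Y ⟶ (shiftFunctor C (1 : ℤ)).obj A),
    (Triangle.mk h f g ∈ distTriang C) ∧
    FactorsThru (memSigmaTperp T) g ∧ memSigmaTperp T A

/-- `X ∈ C(T)`: there is a triangle `T₁ → T₀ → X → ΣT₁` with `T₀, T₁ ∈ add T`. -/
def memCT (T X : C) : Prop :=
  ∃ (T₁ T₀ : C) (a : T₁ ⟶ T₀) (b : T₀ ⟶ X) (c : X ⟶ (shiftFunctor C (1 : ℤ)).obj T₁),
    memAdd T T₁ ∧ memAdd T T₀ ∧ (Triangle.mk a b c ∈ distTriang C)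

/-- `f : X₀ ⟶ Y` is a right `P`-approximation of `Y`. -/
def IsRightApprox (P : C → Prop) {X₀ Y : C} (f : X₀ ⟶ Y) : Prop :=
  P X₀ ∧ ∀ (W : C), P W → ∀ g : W ⟶ Y, ∃ g' : W ⟶ X₀, g' ≫ f = g

/-- `f : Y ⟶ X₀` is a left `P`-approximation of `Y`. -/
def IsLeftApprox (P : C → Prop) {Y X₀ : C} (f : Y ⟶ X₀) : Prop :=
  P X₀ ∧ ∀ (W : C), P W → ∀ g : Y ⟶ W, ∃ g' : X₀ ⟶ W, f ≫ g' = g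

/-- The map `f : X₀ ⟶ Y` is right minimal. -/
def IsRightMinimal {X₀ Y : C} (f : X₀ ⟶ Y) : Prop :=
  ∀ g : X₀ ⟶ X₀, g ≫ f = f → IsIso g

/-- The functor `H = Hom_C(T, -) : C ⥤ Mod End_C(T)ᵒᵖ`.  Here, with Mathlib's
conventions, the endomorphism ring `End (Opposite.op T)` of `T` viewed in `Cᵒᵖ` plays
the role of `End_C(T)ᵒᵖ`, so that each `Hom_C(T, X)` is a left module over it. -/
abbrev homFunctor (T : C) : C ⥤ ModuleCat.{v} (End (Opposite.op T)) :=
  preadditiveCoyonedaObj T ⋙ ModuleCat.restrictScalars.{v}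
    ({ toFun := fun r => MulOpposite.op r.unop
       map_one' := rfl
       map_mul' := fun _ _ => rfl
       map_zero' := rfl
       map_add' := fun _ _ => rfl } : End (Opposite.op T) →+* (End T)ᵐᵒᵖ)

/-- The predicate on `End_C(T)ᵒᵖ`-modules of being finite-dimensional (equivalently,
since `End_C(T)` is a finite-dimensional algebra, finitely generated). -/
abbrev isFinDim (T : C) : ModuleCat.{v} (End (Opposite.op T)) → Prop :=
  fun M => Module.Finite (End (Opposite.op T)) M

/-- The category `mod End_C(T)ᵒᵖ` of finite-dimensional `End_C(T)ᵒᵖ`-modules. -/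
abbrev fdMod (T : C) := ObjectProperty.FullSubcategory (isFinDim T)

/-- The ideal relation on `C(T)` of maps factoring through an object of `ΣT^⊥`. -/
def homRelCT (T : C) : HomRel (ObjectProperty.FullSubcategory (memCT T)) :=
  fun A B f g => FactorsThru (memSigmaTperp T) ((f.hom - g.hom : A.obj ⟶ B.obj))

/-- The ideal relation on `C(T)` of maps factoring through an object of `add ΣT`. -/
def homRelCTadd (T : C) : HomRel (ObjectProperty.FullSubcategory (memCT T)) :=
  fun A B f g => FactorsThru (memAdd ((shiftFunctor C (1 : ℤ)).obj T)) ((f.hom - g.hom : A.obj ⟶ B.obj))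

/-- The ideal relation on `C` of maps factoring through an object of `add ΣT`. -/
def homRelAdd (T : C) : HomRel C :=
  fun A B f g => FactorsThru (memAdd ((shiftFunctor C (1 : ℤ)).obj T)) (f - g)

end PaperBM

open PaperBM

section AuxPaperBM

variable {C : Type u} [Category.{v} C] [Preadditive C] [HasZeroObject C]
  [HasShift C ℤ] [∀ n : ℤ, (shiftFunctor C n).Additive] [Pretriangulated C]
  [HasFiniteBiproducts C]

lemma memAdd_self_aux (T : C) : memAdd T T :=
  ⟨1, biproduct.lift (fun _ => 𝟙 T), biproduct.π _ 0, by simp⟩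

/-- A map into a shifted biproduct vanishes if all its shifted components vanish. -/
lemma shift_biproduct_hom_ext_aux {n : ℕ} {X B : C}
    (ψ : X ⟶ (⨁ fun _ : Fin n => B)⟦(1 : ℤ)⟧)
    (h : ∀ j : Fin n, ψ ≫ (biproduct.π (fun _ : Fin n => B) j)⟦(1 : ℤ)⟧' = 0) : ψ = 0 := by
  have htot : ∑ j : Fin n, biproduct.π (fun _ : Fin n => B) j ≫ biproduct.ι (fun _ : Fin n => B) j
      = 𝟙 (⨁ fun _ : Fin n => B) := biproduct.total
  have h2 : ψ ≫ ((𝟙 (⨁ fun _ : Fin n => B))⟦(1 : ℤ)⟧') = 0 := by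
    rw [← htot, Functor.map_sum, Preadditive.comp_sum]
    exact Finset.sum_eq_zero fun j _ => by
      rw [Functor.map_comp, ← Category.assoc, h j, zero_comp]
  simpa using h2

end AuxPaperBM


/-- For a rigid object `T`, the subcategory `T^⊥` is covariantly finite and `^⊥T` is
contravariantly finite in `C`. -/
theorem statement_2 {C : Type u} [Category.{v} C] [Preadditive C] [HasZeroObject C]
    [HasShift C ℤ] [∀ n : ℤ, (shiftFunctor C n).Additive] [Pretriangulated C]
    [HasFiniteBiproducts C]
    {k : Type*} [Field k] [CategoryTheory.Linear k C]
    [∀ X Y : C, FiniteDimensional k (X ⟶ Y)] [IsIdempotentComplete C]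
    (T : C) (hT : IsRigidObj T) :
    (∀ Y : C, ∃ (X₀ : C) (f : Y ⟶ X₀), IsLeftApprox (memTperp T) f) ∧
    (∀ Y : C, ∃ (X₀ : C) (f : X₀ ⟶ Y), IsRightApprox (memPerpT T) f) := by
  constructor
  · -- covariant finiteness of T^⊥
    intro Y
    set V := (T ⟶ Y⟦(1 : ℤ)⟧) with hV
    let b := Module.finBasis k V
    set n := Module.finrank k V with hn
    let P : C := ⨁ fun _ : Fin n => T
    let F : P ⟶ Y⟦(1 : ℤ)⟧ := biproduct.desc fun i => b i
    obtain ⟨Z, u, g, mem⟩ := distinguished_cocone_triangle₂ F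
    -- base case: every map `T ⟶ ΣZ` vanishes
    have base : ∀ φ : T ⟶ Z⟦(1 : ℤ)⟧, φ = 0 := by
      intro φ
      have hφg : φ ≫ g⟦(1 : ℤ)⟧' = 0 := by
        apply shift_biproduct_hom_ext_aux
        intro j
        rw [Category.assoc, ← Functor.map_comp]
        exact hT _
      obtain ⟨χ, hχ⟩ := Pretriangulated.Triangle.coyoneda_exact₁ _
        (rot_of_distTriang _ mem) φ hφg
      -- χ : T ⟶ Y⟦1⟧, φ = χ ≫ (-(u⟦1⟧'))
      have hχspan : (biproduct.lift fun i => (b.repr χ i) • 𝟙 T) ≫ F = χ := by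
        rw [biproduct.lift_desc]
        have := b.sum_repr χ
        simpa [Linear.smul_comp] using this
      have hzero : F ≫ u⟦(1 : ℤ)⟧' = 0 :=
        comp_distTriang_mor_zero₃₁ _ mem
      rw [hχ]
      dsimp [Triangle.rotate]
      rw [← hχspan]
      erw [Category.assoc, Preadditive.comp_neg, hzero, neg_zero, comp_zero]
      rfl
    have hZ : memTperp T Z := by
      intro X hX φ
      obtain ⟨m, s, r, hsr⟩ := hX
      have hr : r ≫ φ = 0 := by
        apply biproduct.hom_ext'
        intro j
        rw [comp_zero, ← Category.assoc]
        exact base _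
      calc φ = (s ≫ r) ≫ φ := by rw [hsr, Category.id_comp]
        _ = s ≫ r ≫ φ := Category.assoc _ _ _
        _ = 0 := by rw [hr, comp_zero]
    refine ⟨Z, u, hZ, ?_⟩
    intro W hW g₀
    -- use the double rotation of the triangle
    have mem₂ := rot_of_distTriang _ (rot_of_distTriang _ mem)
    have hcond : F ≫ g₀⟦(1 : ℤ)⟧' = 0 := by
      apply biproduct.hom_ext'
      intro j
      rw [← Category.assoc]
      have hι : biproduct.ι (fun _ : Fin n => T) j ≫ F = b j := biproduct.ι_desc _ _
      rw [hι, hW T (memAdd_self_aux T) (b j ≫ g₀⟦(1 : ℤ)⟧'), comp_zero]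
    obtain ⟨ψ, hψ⟩ := Pretriangulated.Triangle.yoneda_exact₂ _ mem₂
      (g₀⟦(1 : ℤ)⟧') hcond
    dsimp [Triangle.rotate] at hψ
    refine ⟨-(shiftFunctor C (1 : ℤ)).preimage ψ, (shiftFunctor C (1 : ℤ)).map_injective ?_⟩
    erw [Functor.map_comp, Functor.map_neg, Functor.map_preimage]
    erw [hψ]
    exact (Preadditive.comp_neg _ _).trans (Preadditive.neg_comp _ _).symm
  · -- contravariant finiteness of ⊥T
    intro Y
    set V := (Y ⟶ T⟦(1 : ℤ)⟧) with hV
    let b := Module.finBasis k V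
    set n := Module.finrank k V with hn
    let P : C := ⨁ fun _ : Fin n => (T⟦(1 : ℤ)⟧)
    let G : Y ⟶ P := biproduct.lift fun i => b i
    obtain ⟨X, h, w, mem⟩ := distinguished_cocone_triangle₁ G
    -- base case: every map `X ⟶ ΣT` vanishes
    have base : ∀ φ : X ⟶ T⟦(1 : ℤ)⟧, φ = 0 := by
      intro φ
      have hwφ : w ≫ φ⟦(1 : ℤ)⟧' = 0 := by
        apply biproduct.hom_ext'
        intro j
        rw [← Category.assoc]
        set q := (biproduct.ι (fun _ : Fin n => (T⟦(1 : ℤ)⟧)) j ≫ w) ≫ φ⟦(1 : ℤ)⟧' with hq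
        have hq2 : q = ((shiftFunctor C (1 : ℤ)).preimage q)⟦(1 : ℤ)⟧' :=
          ((shiftFunctor C (1 : ℤ)).map_preimage q).symm
        rw [hq2, hT ((shiftFunctor C (1 : ℤ)).preimage q), Functor.map_zero, comp_zero]
      obtain ⟨ψ, hψ⟩ := Pretriangulated.Triangle.yoneda_exact₃ _
        (rot_of_distTriang _ mem) (φ⟦(1 : ℤ)⟧') hwφ
      dsimp [Triangle.rotate] at hψ
      -- ψ : Y⟦1⟧ ⟶ (T⟦1⟧)⟦1⟧
      set g₁ : Y ⟶ T⟦(1 : ℤ)⟧ := -((shiftFunctor C (1 : ℤ)).preimage ψ) with hg₁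
      have hφ : φ = h ≫ g₁ := by
        apply (shiftFunctor C (1 : ℤ)).map_injective
        erw [Functor.map_comp, hg₁, Functor.map_neg, Functor.map_preimage, hψ]
        exact ((Preadditive.comp_neg _ _).trans (Preadditive.neg_comp _ _).symm).symm
      have hspan : G ≫ (biproduct.desc fun i => (b.repr g₁ i) • 𝟙 (T⟦(1 : ℤ)⟧)) = g₁ := by
        rw [biproduct.lift_desc]
        have := b.sum_repr g₁
        simpa [Linear.comp_smul] using this
      have hzero : h ≫ G = 0 := comp_distTriang_mor_zero₁₂ _ mem
      rw [hφ, ← hspan, ← Category.assoc, hzero, zero_comp]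
    have hX : memPerpT T X := by
      intro X' hX' φ
      obtain ⟨m, s, r, hsr⟩ := hX'
      have hs : φ ≫ s⟦(1 : ℤ)⟧' = 0 := by
        apply shift_biproduct_hom_ext_aux
        intro j
        rw [Category.assoc, ← Functor.map_comp]
        exact base _
      calc φ = φ ≫ (𝟙 X')⟦(1 : ℤ)⟧' := by simp
        _ = φ ≫ (s ≫ r)⟦(1 : ℤ)⟧' := by rw [hsr]
        _ = (φ ≫ s⟦(1 : ℤ)⟧') ≫ r⟦(1 : ℤ)⟧' := by rw [Functor.map_comp, Category.assoc]
        _ = 0 := by rw [hs, zero_comp]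
    refine ⟨X, h, hX, ?_⟩
    intro W hW g₀
    have hcond : g₀ ≫ G = 0 := by
      apply biproduct.hom_ext
      intro j
      rw [Category.assoc]
      have hπ : G ≫ biproduct.π _ j = b j := biproduct.lift_π _ _
      rw [hπ, hW T (memAdd_self_aux T) (g₀ ≫ b j), zero_comp]
    obtain ⟨g', hg'⟩ := Pretriangulated.Triangle.coyoneda_exact₂ _ mem g₀ hcond
    exact ⟨g', hg'.symm⟩
end
end

section
/- Let T be a rigid object in C, let X be an object of C(T) and Y any object of C, and suppose f : X → Y factors through an object of ΣT^⊥. Then f factors through an object of add ΣT. -/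
/-!
Common setup: `C` is a Hom-finite, Krull-Schmidt (= idempotent complete, given
Hom-finiteness over a field), `k`-linear triangulated category with suspension
functor `Σ = shiftFunctor C (1 : ℤ)`, and `T` is a rigid object of `C`.
-/

noncomputable section

open CategoryTheory CategoryTheory.Limits CategoryTheory.Pretriangulated

universe v u

namespace PaperBM
lemma memAdd_shift {C : Type u} [Category.{v} C] [Preadditive C] [HasZeroObject C]
    [HasShift C ℤ] [∀ n : ℤ, (shiftFunctor C n).Additive] [Pretriangulated C]
    [HasFiniteBiproducts C] {T X : C} (h : memAdd T X) :
    memAdd ((shiftFunctor C (1 : ℤ)).obj T) ((shiftFunctor C (1 : ℤ)).obj X) := by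
  obtain ⟨n, s, r, hsr⟩ := h
  set F := shiftFunctor C (1 : ℤ)
  refine ⟨n, F.map s ≫ (F.mapBiproduct fun _ : Fin n => T).hom,
    (F.mapBiproduct fun _ : Fin n => T).inv ≫ F.map r, ?_⟩
  rw [Category.assoc, Iso.hom_inv_id_assoc, ← F.map_comp, hsr, F.map_id]
end PaperBM

open PaperBM

/-- If `X ∈ C(T)` and `f : X ⟶ Y` factors through an object of `ΣT^⊥`, then `f`
factors through an object of `add ΣT`. -/
theorem statement_17 {C : Type u} [Category.{v} C] [Preadditive C] [HasZeroObject C]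
    [HasShift C ℤ] [∀ n : ℤ, (shiftFunctor C n).Additive] [Pretriangulated C]
    [HasFiniteBiproducts C]
    {k : Type*} [Field k] [CategoryTheory.Linear k C]
    [∀ X Y : C, FiniteDimensional k (X ⟶ Y)] [IsIdempotentComplete C]
    (T : C) (hT : IsRigidObj T) {X Y : C} (hX : memCT T X)
    (f : X ⟶ Y) (hf : FactorsThru (memSigmaTperp T) f) :
    FactorsThru (memAdd ((shiftFunctor C (1 : ℤ)).obj T)) f := by
  obtain ⟨T₁, T₀, a, b, c, hT₁, hT₀, htri⟩ := hX
  obtain ⟨Z', g, h, ⟨Z, hZperp, ⟨e⟩⟩, hgh⟩ := hf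
  have hzero : b ≫ (g ≫ e.hom) = 0 := hZperp T₀ hT₀ _
  obtain ⟨g'', hg''⟩ : ∃ g'' : (shiftFunctor C (1 : ℤ)).obj T₁ ⟶ (shiftFunctor C (1 : ℤ)).obj Z,
      g ≫ e.hom = c ≫ g'' := Pretriangulated.Triangle.yoneda_exact₃ _ htri (g ≫ e.hom) hzero
  refine ⟨(shiftFunctor C (1 : ℤ)).obj T₁, c, g'' ≫ e.inv ≫ h, memAdd_shift hT₁, ?_⟩
  rw [← hgh]
  have : g = c ≫ g'' ≫ e.inv := by
    rw [← Category.assoc, Iso.eq_comp_inv]; exact hg''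
  rw [this]; simp
end
end
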